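/- For faces F ⊆ G of an affine semigroup Q, the assignment sending a face NG' of the localized semigroup Q - NF to N(G' ∩ A) and the assignment sending a face NG ⊇ NF of Q to NG - NF are mutually inverse bijections between the face lattice of Q - NF and the set of faces of Q containing F. -/

import Mathlib

/-!
STATEMENT 7: For a face F of an affine semigroup Q = ℕA, the assignment sending a
face ℕG' of the localized semigroup Q - ℕF to ℕ(G' ∩ A), and the assignment
sending a face ℕG ⊇ ℕF of Q to ℕG - ℕF, are mutually inverse bijections between
the face lattice of Q - ℕF and the set of faces of Q containing F.
-/

open scoped BigOperators

noncomputable section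

def IsFace {d : ℕ} (Q F : AddSubmonoid (Fin d → ℤ)) : Prop :=
  F ≤ Q ∧ ∀ a b : Fin d → ℤ, a ∈ Q → b ∈ Q → (a + b ∈ F ↔ a ∈ F ∧ b ∈ F)

def locSemigroup {d : ℕ} (Q F : AddSubmonoid (Fin d → ℤ)) : AddSubmonoid (Fin d → ℤ) where
  carrier := {x | ∃ q ∈ Q, ∃ f ∈ F, x = q - f}
  zero_mem' := ⟨0, Q.zero_mem, 0, F.zero_mem, by simp⟩
  add_mem' := by
    rintro a b ⟨q1, hq1, f1, hf1, rfl⟩ ⟨q2, hq2, f2, hf2, rfl⟩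
    exact ⟨q1 + q2, Q.add_mem hq1 hq2, f1 + f2, F.add_mem hf1 hf2, by abel⟩


lemma face_mem_closure_inter {d : ℕ} {M P : AddSubmonoid (Fin d → ℤ)}
    {A : Set (Fin d → ℤ)} (hAM : A ⊆ M) (hP : IsFace M P) {q : Fin d → ℤ}
    (hq : q ∈ AddSubmonoid.closure A) (hqP : q ∈ P) :
    q ∈ AddSubmonoid.closure ((P : Set (Fin d → ℤ)) ∩ A) := by
  induction hq using AddSubmonoid.closure_induction with
  | mem a ha => exact AddSubmonoid.subset_closure ⟨hqP, ha⟩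
  | zero => exact zero_mem _
  | add x y hx hy ihx ihy =>
    have hM : AddSubmonoid.closure A ≤ M := (AddSubmonoid.closure_le).mpr hAM
    have := (hP.2 x y (hM hx) (hM hy)).mp hqP
    exact add_mem (ihx this.1) (ihy this.2)

theorem face_lattice_of_localization
    {d : ℕ} (A : Finset (Fin d → ℤ)) (h0 : (0 : Fin d → ℤ) ∉ A)
    (Q : AddSubmonoid (Fin d → ℤ)) (hQ : Q = AddSubmonoid.closure (A : Set (Fin d → ℤ)))
    (F : AddSubmonoid (Fin d → ℤ)) (hF : IsFace Q F) :
    -- the map G ↦ ℕG - ℕF sends faces of Q containing F to faces of Q - ℕF,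
    -- and G ↦ ℕ(G ∩ A) is a left inverse to it
    (∀ G : AddSubmonoid (Fin d → ℤ), IsFace Q G → F ≤ G →
      IsFace (locSemigroup Q F) (locSemigroup G F) ∧
      AddSubmonoid.closure ((locSemigroup G F : Set (Fin d → ℤ)) ∩ (A : Set (Fin d → ℤ))) = G) ∧
    -- conversely, G' ↦ ℕ(G' ∩ A) sends faces of Q - ℕF to faces of Q containing F,
    -- and G ↦ ℕG - ℕF is a left inverse to it
    (∀ G' : AddSubmonoid (Fin d → ℤ), IsFace (locSemigroup Q F) G' →
      IsFace Q (AddSubmonoid.closure ((G' : Set (Fin d → ℤ)) ∩ (A : Set (Fin d → ℤ)))) ∧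
      F ≤ AddSubmonoid.closure ((G' : Set (Fin d → ℤ)) ∩ (A : Set (Fin d → ℤ))) ∧
      locSemigroup (AddSubmonoid.closure ((G' : Set (Fin d → ℤ)) ∩ (A : Set (Fin d → ℤ)))) F = G') := by
  have hAQ : (A : Set (Fin d → ℤ)) ⊆ Q := by
    rw [hQ]; exact AddSubmonoid.subset_closure
  have hQloc : Q ≤ locSemigroup Q F := fun q hq => ⟨q, hq, 0, F.zero_mem, by simp⟩
  constructor
  · intro G hG hFG
    have hGA : AddSubmonoid.closure ((G : Set (Fin d → ℤ)) ∩ (A : Set (Fin d → ℤ))) = G := by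
      apply le_antisymm
      · exact AddSubmonoid.closure_le.mpr (fun x hx => hx.1)
      · intro g hg
        exact face_mem_closure_inter hAQ hG (by rw [← hQ]; exact hG.1 hg) hg
    refine ⟨⟨?_, ?_⟩, ?_⟩
    · rintro x ⟨g, hg, f, hf, rfl⟩
      exact ⟨g, hG.1 hg, f, hf, rfl⟩
    · rintro a b ⟨q1, hq1, f1, hf1, rfl⟩ ⟨q2, hq2, f2, hf2, rfl⟩
      constructor
      · rintro ⟨g, hg, f, hf, he⟩
        have he2 : q1 + q2 + f = g + (f1 + f2) := by
          have h := he
          funext i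
          have := congrFun h i
          simp [Pi.add_apply, Pi.sub_apply] at this ⊢
          linarith
        have hsum : q1 + q2 + f ∈ G := by
          rw [he2]; exact G.add_mem hg (hFG (F.add_mem hf1 hf2))
        have h12 := (hG.2 (q1 + q2) f (Q.add_mem hq1 hq2) (hF.1 hf)).mp hsum
        have h1 := (hG.2 q1 q2 hq1 hq2).mp h12.1
        exact ⟨⟨q1, h1.1, f1, hf1, rfl⟩, ⟨q2, h1.2, f2, hf2, rfl⟩⟩
      · rintro ⟨⟨g1, hg1, e1, he1, h1⟩, ⟨g2, hg2, e2, he2, h2⟩⟩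
        exact ⟨g1 + g2, G.add_mem hg1 hg2, e1 + e2, F.add_mem he1 he2,
          by rw [h1, h2]; abel⟩
    · have : (locSemigroup G F : Set (Fin d → ℤ)) ∩ (A : Set (Fin d → ℤ))
          = (G : Set (Fin d → ℤ)) ∩ (A : Set (Fin d → ℤ)) := by
        ext a
        constructor
        · rintro ⟨⟨g, hg, f, hf, rfl⟩, ha⟩
          refine ⟨?_, ha⟩
          have hgf : (g - f) + f ∈ G := by simpa using hg
          exact ((hG.2 (g - f) f (hQ ▸ AddSubmonoid.subset_closure ha) (hF.1 hf)).mp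
            hgf).1
        · rintro ⟨hg, ha⟩
          exact ⟨⟨a, hg, 0, F.zero_mem, by simp⟩, ha⟩
      rw [this, hGA]
  · intro G' hG'
    set H := AddSubmonoid.closure ((G' : Set (Fin d → ℤ)) ∩ (A : Set (Fin d → ℤ))) with hH
    have hHQ : H ≤ Q := by
      rw [hQ]; exact AddSubmonoid.closure_le.mpr (fun x hx => AddSubmonoid.subset_closure hx.2)
    have hHG' : H ≤ G' := AddSubmonoid.closure_le.mpr (fun x hx => hx.1)
    have hFG' : ∀ f ∈ F, f ∈ G' ∧ -f ∈ G' := by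
      intro f hf
      have h1 : f ∈ locSemigroup Q F := hQloc (hF.1 hf)
      have h2 : -f ∈ locSemigroup Q F := ⟨0, Q.zero_mem, f, hf, by simp⟩
      have h0 : f + (-f) ∈ G' := by simpa using G'.zero_mem
      exact (hG'.2 f (-f) h1 h2).mp h0
    -- key: elements of Q that are in G' are in H
    have key : ∀ q ∈ Q, q ∈ G' → q ∈ H := by
      intro q hq hq'
      exact face_mem_closure_inter (M := locSemigroup Q F)
        (fun a ha => hQloc (hAQ ha)) hG' (by rw [← hQ]; exact hq) hq'
    have hface : IsFace Q H := by
      refine ⟨hHQ, ?_⟩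
      intro a b ha hb
      constructor
      · intro hab
        have := (hG'.2 a b (hQloc ha) (hQloc hb)).mp (hHG' hab)
        exact ⟨key a ha this.1, key b hb this.2⟩
      · rintro ⟨h1, h2⟩; exact H.add_mem h1 h2
    refine ⟨hface, ?_, ?_⟩
    · intro f hf
      exact key f (hF.1 hf) (hFG' f hf).1
    · apply le_antisymm
      · rintro x ⟨h, hh, f, hf, rfl⟩
        have : h - f = h + (-f) := by abel
        rw [this]
        exact G'.add_mem (hHG' hh) (hFG' f hf).2
      · intro x hx
        obtain ⟨q, hq, f, hf, rfl⟩ := hG'.1 hx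
        refine ⟨q, ?_, f, hf, rfl⟩
        have hqG' : q ∈ G' := by
          have : (q - f) + f = q := by abel
          rw [← this]
          exact G'.add_mem hx (hFG' f hf).1
        exact key q hq hqG'


end
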